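/- Let δ₀, K > 0, set K₁ = 3K/(2δ₀), and define ψ(x) = cosh(K₁) − cosh(K₁(2x−1)). Let a, b : ℝ → ℝ with a differentiable, and suppose that for all x ∈ [0,1] one has a(x) ≥ δ₀, |a'(x)| ≤ K and |b(x)| ≤ K. Then for every x ∈ [0,1], a(x)·ψ''(x) + (2a'(x) − b(x))·ψ'(x) ≤ 0. -/

import Mathlib

/-- Lemma 5.2 (weight lemma), differential inequality: with `K₁ = 3K/(2δ₀)` and
`ψ x = cosh K₁ − cosh (K₁ (2x−1))`, if `a ≥ δ₀`, `|a'| ≤ K`, `|b| ≤ K` on `[0,1]`, then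
`a ψ'' + (2a' − b) ψ' ≤ 0` on `[0,1]`. -/
theorem stmt_0 (δ₀ K : ℝ) (hδ : 0 < δ₀) (hK : 0 < K)
    (K₁ : ℝ) (hK₁ : K₁ = 3 * K / (2 * δ₀))
    (ψ : ℝ → ℝ) (hψ : ψ = fun x : ℝ => Real.cosh K₁ - Real.cosh (K₁ * (2 * x - 1)))
    (a b : ℝ → ℝ) (ha : Differentiable ℝ a)
    (haδ : ∀ x ∈ Set.Icc (0:ℝ) 1, δ₀ ≤ a x)
    (ha' : ∀ x ∈ Set.Icc (0:ℝ) 1, |deriv a x| ≤ K)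
    (hb : ∀ x ∈ Set.Icc (0:ℝ) 1, |b x| ≤ K) :
    ∀ x ∈ Set.Icc (0:ℝ) 1,
      a x * deriv (deriv ψ) x + (2 * deriv a x - b x) * deriv ψ x ≤ 0 := by
  have hg : ∀ x : ℝ, HasDerivAt (fun x : ℝ => K₁ * (2 * x - 1)) (2 * K₁) x := by
    intro x
    have : HasDerivAt (fun x : ℝ => K₁ * (2 * x - 1)) (K₁ * 2) x := by
      have h2 : HasDerivAt (fun x : ℝ => 2 * x - 1) 2 x := by
        simpa using ((hasDerivAt_id x).const_mul 2).sub_const 1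
      simpa using h2.const_mul K₁
    simpa [mul_comm] using this
  have hψ' : deriv ψ = fun x : ℝ => -(2 * K₁ * Real.sinh (K₁ * (2 * x - 1))) := by
    funext x
    have h : HasDerivAt ψ (-(2 * K₁ * Real.sinh (K₁ * (2 * x - 1)))) x := by
      rw [hψ]
      have h0 := ((hg x).cosh).const_sub (Real.cosh K₁)
      exact h0.congr_deriv (by ring)
    exact h.deriv
  have hψ'' : ∀ x : ℝ, deriv (deriv ψ) x
      = -(4 * K₁ ^ 2 * Real.cosh (K₁ * (2 * x - 1))) := by
    intro x
    rw [hψ']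
    have h : HasDerivAt (fun x : ℝ => -(2 * K₁ * Real.sinh (K₁ * (2 * x - 1))))
        (-(4 * K₁ ^ 2 * Real.cosh (K₁ * (2 * x - 1)))) x := by
      have h0 := (((hg x).sinh).const_mul (2 * K₁)).neg
      exact h0.congr_deriv (by ring)
    exact h.deriv
  intro x hx
  simp only [hψ'']; simp only [hψ']
  set u := K₁ * (2 * x - 1) with hu
  have hK₁pos : 0 < K₁ := by rw [hK₁]; positivity
  have hcosh : 0 < Real.cosh u := Real.cosh_pos u
  have hsinh : |Real.sinh u| ≤ Real.cosh u := by
    rw [abs_le]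
    constructor <;> nlinarith [Real.cosh_sq u, Real.cosh_pos u]
  have h1 : |2 * deriv a x - b x| ≤ 3 * K := by
    have := ha' x hx
    have := hb x hx
    calc |2 * deriv a x - b x| ≤ |2 * deriv a x| + |b x| := abs_sub _ _
      _ ≤ 2 * K + K := by rw [abs_mul]; simp; linarith [ha' x hx, hb x hx]
      _ = 3 * K := by ring
  have haδx := haδ x hx
  have key : (2 * deriv a x - b x) * -(2 * K₁ * Real.sinh u)
      ≤ 3 * K * (2 * K₁ * Real.cosh u) := by
    calc (2 * deriv a x - b x) * -(2 * K₁ * Real.sinh u)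
        ≤ |(2 * deriv a x - b x) * -(2 * K₁ * Real.sinh u)| := le_abs_self _
      _ = |2 * deriv a x - b x| * (2 * K₁ * |Real.sinh u|) := by
          rw [abs_mul, abs_neg, abs_mul, abs_mul]
          rw [abs_of_pos (by norm_num : (0:ℝ) < 2), abs_of_pos hK₁pos]
      _ ≤ 3 * K * (2 * K₁ * Real.cosh u) := by
          apply mul_le_mul h1 _ (by positivity) (by linarith)
          exact mul_le_mul_of_nonneg_left hsinh (by positivity)
  have ha2 : a x * -(4 * K₁ ^ 2 * Real.cosh u) ≤ δ₀ * -(4 * K₁ ^ 2 * Real.cosh u) := by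
    apply mul_le_mul_of_nonpos_right haδx
    nlinarith
  have hzero : δ₀ * -(4 * K₁ ^ 2 * Real.cosh u) + 3 * K * (2 * K₁ * Real.cosh u) = 0 := by
    have h : δ₀ * K₁ = 3 * K / 2 := by
      rw [hK₁]; field_simp
    linear_combination (-(4 * K₁ * Real.cosh u)) * h
  linarith [key, ha2]
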